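/- Fix d ≥ 1 and let θ assign to each pair (λ, κ) of multi-indices in ℕ^d with κ ∈ □⁻_λ a real weight θ^λ_κ. Define Θ^λ_ν for λ, ν ∈ ℕ^d by: Θ^λ_λ = 1; Θ^λ_ν = Σ_{κ ∈ □⁻_λ} θ^λ_κ · Θ^κ_ν if ν ≤ λ and ν ≠ λ; and Θ^λ_ν = 0 otherwise. Suppose p, y : ℕ^d → ℝ satisfy p(0) = y(0) and, for every λ ≠ 0, p(λ) = y(λ) + Σ_{ν ∈ □⁻_λ} θ^λ_ν · p(ν). Then for every λ ∈ ℕ^d: p(λ) = Σ_{ν ≤ λ} Θ^λ_ν · y(ν), the sum being over all multi-indices ν ≤ λ componentwise. -/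
import Mathlib


/-- expansion of the weighted multi-index MLMC recursion.
With multi-indices in `ℕ^d`, local weights `θ`, cumulative weights `Θ`
defined by `Θ λ λ = 1`, `Θ λ ν = Σ_{κ ∈ □⁻_λ} θ λ κ · Θ κ ν` for `ν < λ`,
and `Θ λ ν = 0` otherwise, any `p, y` satisfying `p 0 = y 0` and
`p λ = y λ + Σ_{ν ∈ □⁻_λ} θ λ ν · p ν` for `λ ≠ 0` expand as
`p λ = Σ_{ν ≤ λ} Θ λ ν · y ν`. -/
theorem wmimc_expansion
    (d : ℕ) (hd : 1 ≤ d)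
    (θ Θ : (Fin d → ℕ) → (Fin d → ℕ) → ℝ)
    (hΘdiag : ∀ lam : Fin d → ℕ, Θ lam lam = 1)
    (hΘrec : ∀ lam ν : Fin d → ℕ, ν ≤ lam → ν ≠ lam →
      Θ lam ν = ∑ κ ∈ (Finset.Iic lam).filter
          (fun l => l ≠ lam ∧ ∀ i, lam i - l i ≤ 1),
        θ lam κ * Θ κ ν)
    (hΘzero : ∀ lam ν : Fin d → ℕ, ¬ ν ≤ lam → Θ lam ν = 0)
    (p y : (Fin d → ℕ) → ℝ)
    (hp0 : p 0 = y 0)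
    (hprec : ∀ lam : Fin d → ℕ, lam ≠ 0 →
      p lam = y lam + ∑ ν ∈ (Finset.Iic lam).filter
          (fun l => l ≠ lam ∧ ∀ i, lam i - l i ≤ 1),
        θ lam ν * p ν) :
    ∀ lam : Fin d → ℕ, p lam = ∑ ν ∈ Finset.Iic lam, Θ lam ν * y ν := by
  have key : ∀ n : ℕ, ∀ lam : Fin d → ℕ, (∑ i, lam i) = n →
      p lam = ∑ ν ∈ Finset.Iic lam, Θ lam ν * y ν := by
    intro n
    induction n using Nat.strong_induction_on with
    | _ n ih =>
      intro lam hn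
      by_cases h0 : lam = 0
      · subst h0
        have hIic : Finset.Iic (0 : Fin d → ℕ) = {0} := by
          ext x
          simp only [Finset.mem_Iic, Finset.mem_singleton]
          constructor
          · intro h; exact le_antisymm h (by intro i; exact Nat.zero_le _)
          · rintro rfl; exact le_refl _
        rw [hIic]
        simp [hΘdiag, hp0]
      · set S := (Finset.Iic lam).filter
            (fun l => l ≠ lam ∧ ∀ i, lam i - l i ≤ 1) with hSdef
        have hS : ∀ κ ∈ S, κ ≤ lam ∧ κ ≠ lam := by
          intro κ hκ
          simp only [hSdef, Finset.mem_filter, Finset.mem_Iic] at hκ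
          exact ⟨hκ.1, hκ.2.1⟩
        have hpκ : ∀ κ ∈ S, p κ = ∑ ν ∈ Finset.Iic lam, Θ κ ν * y ν := by
          intro κ hκ
          obtain ⟨hle, hne⟩ := hS κ hκ
          have hlt : ∑ i, κ i < ∑ i, lam i := by
            apply Finset.sum_lt_sum (fun i _ => hle i)
            by_contra hc
            push_neg at hc
            exact hne (funext fun i => le_antisymm (hle i)
              (hc i (Finset.mem_univ i)))
          rw [ih _ (hn ▸ hlt) κ rfl]
          apply Finset.sum_subset (Finset.Iic_subset_Iic.mpr hle)
          intro ν _ hν2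
          rw [hΘzero κ ν (by simpa [Finset.mem_Iic] using hν2), zero_mul]
        rw [hprec lam h0, Finset.sum_congr rfl
          (fun κ hκ => by rw [hpκ κ hκ])]
        have hmem : lam ∈ Finset.Iic lam := Finset.mem_Iic.mpr le_rfl
        rw [← Finset.add_sum_erase _ _ hmem, hΘdiag, one_mul]
        congr 1
        simp_rw [Finset.mul_sum]
        rw [Finset.sum_comm]
        rw [← Finset.add_sum_erase _ _ hmem]
        have hzero : ∑ κ ∈ S, θ lam κ * (Θ κ lam * y lam) = 0 := by
          apply Finset.sum_eq_zero
          intro κ hκ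
          obtain ⟨hle, hne⟩ := hS κ hκ
          rw [hΘzero κ lam (fun h => hne (le_antisymm hle h)), zero_mul,
            mul_zero]
        rw [hzero, zero_add]
        apply Finset.sum_congr rfl
        intro ν hν
        rw [Finset.mem_erase, Finset.mem_Iic] at hν
        rw [hΘrec lam ν hν.2 hν.1, Finset.sum_mul]
        apply Finset.sum_congr rfl
        intro κ _
        ring
  intro lam
  exact key _ lam rfl
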